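/- Let L : A × B → ℝ where A is a convex subset of a reflexive Banach space, B a convex subset of a normed space, L(·, v) is concave and upper-semicontinuous for each v ∈ B, L(u, ·) is affine and continuous for each u ∈ A, and A is bounded and closed. Then sup_{u∈A} inf_{v∈B} L(u,v) = inf_{v∈B} sup_{u∈A} L(u,v). -/

import Mathlib

set_option maxHeartbeats 1000000
open Set NormedSpace Metric


section Weak
variable {E : Type*} [NormedAddCommGroup E] [NormedSpace ℝ E]

noncomputable def wEquiv (hrefl : Function.Surjective (inclusionInDoubleDual ℝ E)) :
    WeakSpace ℝ E ≃ₜ WeakDual ℝ (StrongDual ℝ E) where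
  toEquiv := Equiv.ofBijective (fun x => inclusionInDoubleDual ℝ E x)
    ⟨(inclusionInDoubleDualLi ℝ (E := E)).injective, hrefl⟩
  continuous_toFun := by
    apply WeakBilin.continuous_of_continuous_eval
    intro f
    exact WeakBilin.eval_continuous ((topDualPairing ℝ E).flip) f
  continuous_invFun := by
    apply WeakBilin.continuous_of_continuous_eval
    intro f
    refine (WeakBilin.eval_continuous (topDualPairing ℝ (StrongDual ℝ E)) f).congr fun φ => ?_
    set e := Equiv.ofBijective (fun x => inclusionInDoubleDual ℝ E x)
      ⟨(inclusionInDoubleDualLi ℝ (E := E)).injective, hrefl⟩ with he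
    show (topDualPairing ℝ (StrongDual ℝ E)) φ f = ((topDualPairing ℝ E).flip (e.invFun φ)) f
    have h1 : inclusionInDoubleDual ℝ E (e.invFun φ) = φ := e.apply_symm_apply φ
    calc (topDualPairing ℝ (StrongDual ℝ E)) φ f
        = (topDualPairing ℝ (StrongDual ℝ E)) (inclusionInDoubleDual ℝ E (e.invFun φ)) f := by rw [h1]
    _ = f (e.invFun φ) := rfl
    _ = ((topDualPairing ℝ E).flip (e.invFun φ)) f := rfl

lemma weakClosed_of_convex_closed {A : Set E} (hconv : Convex ℝ A) (hcl : IsClosed A) :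
    IsClosed (toWeakSpace ℝ E '' A) := by
  have h := hconv.toWeakSpace_closure (𝕜 := ℝ)
  rw [hcl.closure_eq] at h
  rw [h]
  exact isClosed_closure

lemma weakCompact_of_bounded_closed_convex
    (hrefl : Function.Surjective (inclusionInDoubleDual ℝ E))
    {A : Set E} (hAbdd : Bornology.IsBounded A) (hAclosed : IsClosed A)
    (hAconv : Convex ℝ A) : IsCompact (toWeakSpace ℝ E '' A) := by
  obtain ⟨r, hr⟩ := hAbdd.subset_closedBall 0
  set e := wEquiv hrefl
  rw [← Homeomorph.isCompact_image (h := e)]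
  have himg : e '' (toWeakSpace ℝ E '' A)
      = (fun x : E => ((inclusionInDoubleDual ℝ E x : StrongDual ℝ (StrongDual ℝ E)) :
          WeakDual ℝ (StrongDual ℝ E))) '' A := by
    rw [Set.image_image]; rfl
  rw [himg]
  apply IsCompact.of_isClosed_subset (WeakDual.isCompact_closedBall (𝕜 := ℝ) (E := StrongDual ℝ E) 0 r)
  · rw [← himg]
    exact (Homeomorph.isClosed_image e).2 (weakClosed_of_convex_closed hAconv hAclosed)
  · rintro - ⟨x, hx, rfl⟩
    have : ‖inclusionInDoubleDual ℝ E x‖ = ‖x‖ := (inclusionInDoubleDualLi ℝ (E := E)).norm_map x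
    simp only [Set.mem_preimage, Metric.mem_closedBall]
    have hx' := hr hx
    rw [Metric.mem_closedBall] at hx'
    have hb : (inclusionInDoubleDual ℝ E x : StrongDual ℝ (StrongDual ℝ E)) ∈
        closedBall (0 : StrongDual ℝ (StrongDual ℝ E)) r := by
      exact (mem_closedBall_zero_iff (E := StrongDual ℝ (StrongDual ℝ E))).2 (this.trans_le (by simpa using hx'))
    exact hb

end Weak

lemma closed_superlevel {X : Type*} [TopologicalSpace X] {f : X → ℝ} {A : Set X}
    (hA : IsClosed A) (hf : UpperSemicontinuousOn f A) (c : ℝ) :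
    IsClosed {x ∈ A | c ≤ f x} := by
  rw [← isOpen_compl_iff]  -- maybe easier: closure subset
  rw [isOpen_compl_iff]
  apply isClosed_of_closure_subset
  intro x hx
  have hxA : x ∈ A := hA.closure_subset (closure_mono (fun y hy => hy.1) hx)
  refine ⟨hxA, ?_⟩
  by_contra h
  push_neg at h
  have hev : ∀ᶠ z in nhdsWithin x A, f z < c := hf x hxA c h
  have hne : (nhdsWithin x {y ∈ A | c ≤ f y}).NeBot := mem_closure_iff_nhdsWithin_neBot.1 hx
  have hev' : ∀ᶠ z in nhdsWithin x {y ∈ A | c ≤ f y}, f z < c :=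
    nhdsWithin_mono x (fun y hy => hy.1) hev
  have hev'' : ∀ᶠ z in nhdsWithin x {y ∈ A | c ≤ f y}, c ≤ f z :=
    eventually_mem_nhdsWithin.mono (fun z hz => hz.2)
  rcases ((hev'.and hev'').exists) with ⟨z, h1, h2⟩
  exact absurd h2 (not_le.2 h1)

lemma no_split {X : Type*} [TopologicalSpace X] {C P Q : Set X} (hC : IsPreconnected C)
    (hP : IsClosed P) (hQ : IsClosed Q) (hcov : C ⊆ P ∪ Q) (hdisj : C ∩ (P ∩ Q) = ∅)
    (h1 : (C ∩ P).Nonempty) (h2 : (C ∩ Q).Nonempty) : False := by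
  have hmem : ∀ z ∈ C, z ∈ P → z ∈ Q → False := by
    intro z hz hzP hzQ
    have : z ∈ C ∩ (P ∩ Q) := ⟨hz, hzP, hzQ⟩
    rw [hdisj] at this; exact this
  have hsub : C ⊆ Qᶜ ∪ Pᶜ := by
    intro z hz
    rcases hcov hz with hzP | hzQ
    · exact Or.inl (fun hzQ => hmem z hz hzP hzQ)
    · exact Or.inr (fun hzP => hmem z hz hzP hzQ)
  have hne1 : (C ∩ Qᶜ).Nonempty := by
    obtain ⟨z, hzC, hzP⟩ := h1
    exact ⟨z, hzC, fun hzQ => hmem z hzC hzP hzQ⟩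
  have hne2 : (C ∩ Pᶜ).Nonempty := by
    obtain ⟨z, hzC, hzQ⟩ := h2
    exact ⟨z, hzC, fun hzP => hmem z hzC hzP hzQ⟩
  obtain ⟨z, hzC, hz1, hz2⟩ := hC Qᶜ Pᶜ hQ.isOpen_compl hP.isOpen_compl hsub hne1 hne2
  rcases hcov hzC with h | h
  · exact hz2 h
  · exact hz1 h

section Helpers
variable {E F : Type*} [NormedAddCommGroup E] [NormedSpace ℝ E]
  [NormedAddCommGroup F] [NormedSpace ℝ F]

lemma superlevel_convex {A S : Set E} {f : E → ℝ} (hf : ConcaveOn ℝ A f)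
    (hSconv : Convex ℝ S) (hSA : S ⊆ A) (r : ℝ) : Convex ℝ {u ∈ S | r ≤ f u} := by
  intro u hu w hw ca cb hca hcb hab
  refine ⟨hSconv hu.1 hw.1 hca hcb hab, ?_⟩
  have h2 := hf.2 (hSA hu.1) (hSA hw.1) hca hcb hab
  simp only [smul_eq_mul] at h2
  have h3 : ca * r + cb * r = r := by rw [← add_mul, hab, one_mul]
  have h4 := mul_le_mul_of_nonneg_left hu.2 hca
  have h5 := mul_le_mul_of_nonneg_left hw.2 hcb
  linarith

lemma twoPoint {A : Set E} {B : Set F} {L : E → F → ℝ}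
    (hBconv : Convex ℝ B)
    (hconc : ∀ v ∈ B, ConcaveOn ℝ A (fun u => L u v))
    (husc : ∀ v ∈ B, UpperSemicontinuousOn (fun u => L u v) A)
    (haff : ∀ u ∈ A, ∀ v₁ ∈ B, ∀ v₂ ∈ B, ∀ c : ℝ, 0 ≤ c → c ≤ 1 →
      L u (c • v₁ + (1 - c) • v₂) = c * L u v₁ + (1 - c) * L u v₂)
    {m M : ℝ} (hm : ∀ u ∈ A, ∀ v ∈ B, m ≤ L u v) (hM : ∀ u ∈ A, ∀ v ∈ B, L u v ≤ M)
    {S : Set E} (hSA : S ⊆ A) (hSconv : Convex ℝ S) (hSclosed : IsClosed S)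
    {β : ℝ} (hS : ∀ v ∈ B, ∀ lam : ℝ, lam < β → ∃ u ∈ S, lam < L u v)
    {v₁ v₂ : F} (hv₁ : v₁ ∈ B) (hv₂ : v₂ ∈ B) {c : ℝ} (hc : c < β) :
    ∃ u ∈ S, c < L u v₁ ∧ c < L u v₂ := by
  by_contra hcon
  push_neg at hcon
  -- hcon : ∀ u ∈ S, c < L u v₁ → L u v₂ ≤ c
  set a := c + (β - c)/3 with ha
  set b := c + 2*(β - c)/3 with hb
  have hca : c < a := by simp only [ha]; linarith
  have hab : a < b := by simp only [ha, hb]; linarith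
  have hbβ : b < β := by simp only [hb]; linarith
  have haβ : a < β := by linarith
  set z : ℝ → F := fun t => t • v₁ + (1 - t) • v₂ with hzdef
  have hzB : ∀ t ∈ Icc (0:ℝ) 1, z t ∈ B := fun t ht =>
    hBconv hv₁ hv₂ ht.1 (by linarith [ht.2]) (by ring)
  have hzval : ∀ u ∈ A, ∀ t ∈ Icc (0:ℝ) 1, L u (z t) = t * L u v₁ + (1 - t) * L u v₂ :=
    fun u hu t ht => haff u hu v₁ hv₁ v₂ hv₂ t ht.1 ht.2
  have hz0 : z 0 = v₂ := by simp [hzdef]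
  have hz1 : z 1 = v₁ := by simp [hzdef]
  -- key pointwise dichotomy
  have key : ∀ u ∈ S, ∀ lvl : ℝ, c < lvl → ∀ t ∈ Icc (0:ℝ) 1, lvl ≤ L u (z t) →
      (lvl ≤ L u v₁ ∧ L u v₂ ≤ c) ∨ (lvl ≤ L u v₂ ∧ L u v₁ ≤ c) := by
    intro u hu lvl hclvl t ht hlvl
    rw [hzval u (hSA hu) t ht] at hlvl
    by_cases hcase : c < L u v₁
    · have hL₂ : L u v₂ ≤ c := hcon u hu hcase
      left
      refine ⟨?_, hL₂⟩
      by_contra hL₁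
      push_neg at hL₁
      nlinarith [mul_nonneg ht.1 (sub_pos.mpr hL₁).le,
        mul_nonneg (by linarith [ht.2] : (0:ℝ) ≤ 1 - t) (by linarith : (0:ℝ) ≤ lvl - L u v₂),
        mul_pos (by linarith [ht.2] : (0:ℝ) < 1 - t + t) (by linarith : (0:ℝ) < lvl - L u v₂)]
    · push_neg at hcase
      right
      refine ⟨?_, hcase⟩
      by_contra hL₂
      push_neg at hL₂
      nlinarith [mul_nonneg ht.1 (by linarith : (0:ℝ) ≤ lvl - L u v₁),
        mul_nonneg (by linarith [ht.2] : (0:ℝ) ≤ 1 - t) (sub_pos.mpr hL₂).le]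
  set I := {t ∈ Icc (0:ℝ) 1 | ∃ u ∈ S, a ≤ L u (z t) ∧ a ≤ L u v₂} with hI
  set J := {t ∈ Icc (0:ℝ) 1 | ∃ u ∈ S, a ≤ L u (z t) ∧ a ≤ L u v₁} with hJ
  -- disjointness via connectedness
  have disj : ∀ t ∈ Icc (0:ℝ) 1, t ∈ I → t ∈ J → False := by
    intro t ht htI htJ
    obtain ⟨-, uI, huIS, huIz, huI2⟩ := htI
    obtain ⟨-, uJ, huJS, huJz, huJ1⟩ := htJ
    have hzBt := hzB t ht
    set C := {u ∈ S | a ≤ L u (z t)} with hC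
    have hCconv : Convex ℝ C := superlevel_convex (hconc _ hzBt) hSconv hSA a
    set P := {u ∈ S | a ≤ L u v₁} with hP
    set Q := {u ∈ S | a ≤ L u v₂} with hQ
    have hPcl : IsClosed P := closed_superlevel hSclosed ((husc v₁ hv₁).mono hSA) a
    have hQcl : IsClosed Q := closed_superlevel hSclosed ((husc v₂ hv₂).mono hSA) a
    refine no_split hCconv.isPreconnected hPcl hQcl ?_ ?_ ⟨uJ, ⟨huJS, huJz⟩, huJS, huJ1⟩
      ⟨uI, ⟨huIS, huIz⟩, huIS, huI2⟩
    · intro u hu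
      rcases key u hu.1 a hca t ht hu.2 with ⟨h1, -⟩ | ⟨h1, -⟩
      · exact Or.inl ⟨hu.1, h1⟩
      · exact Or.inr ⟨hu.1, h1⟩
    · ext u
      simp only [Set.mem_inter_iff, Set.mem_empty_iff_false, iff_false, not_and]
      intro huC huP huQ
      exact absurd (hcon u huC.1 (lt_of_lt_of_le hca huP.2)) (by linarith [huQ.2])
  -- bounds
  obtain ⟨u₀, hu₀S, -⟩ := hS v₁ hv₁ (β - 1) (by linarith)
  have hMm : m ≤ M := le_trans (hm u₀ (hSA hu₀S) v₁ hv₁) (hM u₀ (hSA hu₀S) v₁ hv₁)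
  set δ := (b - a) / (M - m + 1) with hδ
  have hδpos : 0 < δ := div_pos (by linarith) (by linarith)
  -- 0 ∈ I
  have h0I : (0:ℝ) ∈ I := by
    obtain ⟨u, huS, hu⟩ := hS v₂ hv₂ a haβ
    exact ⟨⟨le_refl 0, zero_le_one⟩, u, huS, by rw [hz0]; exact hu.le, hu.le⟩
  have hIne : I.Nonempty := ⟨0, h0I⟩
  have hIbdd : BddAbove I := ⟨1, fun t ht => ht.1.2⟩
  set τ := sSup I with hτ
  have hτmem : τ ∈ Icc (0:ℝ) 1 := ⟨le_csSup hIbdd h0I, csSup_le hIne fun t ht => ht.1.2⟩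
  obtain ⟨us, husS, hus⟩ := hS (z τ) (hzB τ hτmem) b hbβ
  have husA : us ∈ A := hSA husS
  have hmus1 : m ≤ L us v₁ := hm us husA v₁ hv₁
  have hMus1 : L us v₁ ≤ M := hM us husA v₁ hv₁
  have hmus2 : m ≤ L us v₂ := hm us husA v₂ hv₂
  have hMus2 : L us v₂ ≤ M := hM us husA v₂ hv₂
  have hτval : L us (z τ) = τ * L us v₁ + (1 - τ) * L us v₂ := hzval us husA τ hτmem
  rcases key us husS b (by linarith) τ hτmem hus.le with ⟨hbL₁, hL₂c⟩ | ⟨hbL₂, hL₁c⟩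
  · -- case b ≤ L us v₁, L us v₂ ≤ c : contradict below τ
    have hτJ : τ ∈ J := ⟨hτmem, us, husS, by linarith, by linarith⟩
    have hτI : τ ∉ I := fun h => disj τ hτmem h hτJ
    obtain ⟨s, hsI, hslt⟩ := exists_lt_of_lt_csSup hIne (show τ - δ < τ by linarith)
    have hsτ : s < τ := lt_of_le_of_ne (le_csSup hIbdd hsI) (fun h => hτI (h ▸ hsI))
    have hsmem : s ∈ Icc (0:ℝ) 1 := hsI.1
    have hsval : L us (z s) = s * L us v₁ + (1 - s) * L us v₂ := hzval us husA s hsmem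
    have hsz : a ≤ L us (z s) := by
      rw [hsval]
      have h1 : (τ - s) < δ := by linarith
      have h2 : (0:ℝ) ≤ τ - s := by linarith
      have h3 : L us v₁ - L us v₂ ≤ M - m := by linarith
      have h4 : (τ - s) * (L us v₁ - L us v₂) < δ * (M - m + 1) := by
        rcases eq_or_lt_of_le h2 with h5 | h5
        · rw [← h5]; simpa using mul_pos hδpos (by linarith : (0:ℝ) < M - m + 1)
        · calc (τ - s) * (L us v₁ - L us v₂) ≤ (τ - s) * (M - m) :=
                mul_le_mul_of_nonneg_left h3 h2
          _ < δ * (M - m + 1) := by nlinarith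
      have h6 : δ * (M - m + 1) = b - a := div_mul_cancel₀ _ (by linarith)
      have hid : s * L us v₁ + (1 - s) * L us v₂
          = (τ * L us v₁ + (1 - τ) * L us v₂) - (τ - s) * (L us v₁ - L us v₂) := by ring
      linarith [hus, hτval, h4, h6, hid]
    have hsJ : s ∈ J := ⟨hsmem, us, husS, hsz, by linarith⟩
    exact disj s hsmem hsI hsJ
  · -- case b ≤ L us v₂, L us v₁ ≤ c : contradict above τ
    have hτ1 : τ < 1 := by
      rcases lt_or_eq_of_le hτmem.2 with h | h
      · exact h
      · exfalso; rw [h, hz1] at hus; linarith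
    set s := min (τ + δ/2) 1 with hs
    have hsτ : τ < s := lt_min (by linarith) hτ1
    have hsmem : s ∈ Icc (0:ℝ) 1 := ⟨le_trans hτmem.1 hsτ.le, min_le_right _ _⟩
    have hsδ : s - τ < δ := by
      have := min_le_left (τ + δ/2) 1
      simp only [hs]; linarith
    have hsval : L us (z s) = s * L us v₁ + (1 - s) * L us v₂ := hzval us husA s hsmem
    have hsz : a ≤ L us (z s) := by
      rw [hsval]
      have h2 : (0:ℝ) ≤ s - τ := by linarith
      have h3 : L us v₂ - L us v₁ ≤ M - m := by linarith
      have h4 : (s - τ) * (L us v₂ - L us v₁) < δ * (M - m + 1) := by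
        rcases eq_or_lt_of_le h2 with h5 | h5
        · rw [← h5]; simpa using mul_pos hδpos (by linarith : (0:ℝ) < M - m + 1)
        · calc (s - τ) * (L us v₂ - L us v₁) ≤ (s - τ) * (M - m) :=
                mul_le_mul_of_nonneg_left h3 h2
          _ < δ * (M - m + 1) := by nlinarith
      have h6 : δ * (M - m + 1) = b - a := div_mul_cancel₀ _ (by linarith)
      have hid : s * L us v₁ + (1 - s) * L us v₂
          = (τ * L us v₁ + (1 - τ) * L us v₂) - (s - τ) * (L us v₂ - L us v₁) := by ring
      linarith [hus, hτval, h4, h6, hid]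
    have hsI : s ∈ I := ⟨hsmem, us, husS, hsz, by linarith⟩
    exact absurd (le_csSup hIbdd hsI) (not_le.2 hsτ)

lemma finitePoint {A : Set E} {B : Set F} {L : E → F → ℝ}
    (hBconv : Convex ℝ B)
    (hconc : ∀ v ∈ B, ConcaveOn ℝ A (fun u => L u v))
    (husc : ∀ v ∈ B, UpperSemicontinuousOn (fun u => L u v) A)
    (haff : ∀ u ∈ A, ∀ v₁ ∈ B, ∀ v₂ ∈ B, ∀ c : ℝ, 0 ≤ c → c ≤ 1 →
      L u (c • v₁ + (1 - c) • v₂) = c * L u v₁ + (1 - c) * L u v₂)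
    {m M : ℝ} (hm : ∀ u ∈ A, ∀ v ∈ B, m ≤ L u v) (hM : ∀ u ∈ A, ∀ v ∈ B, L u v ≤ M)
    {β : ℝ} (vs : List F) (hvs : ∀ v ∈ vs, v ∈ B) :
    ∀ S : Set E, S ⊆ A → Convex ℝ S → IsClosed S → S.Nonempty →
    (∀ v ∈ B, ∀ lam : ℝ, lam < β → ∃ u ∈ S, lam < L u v) →
    ∀ c : ℝ, c < β → ∃ u ∈ S, ∀ v ∈ vs, c < L u v := by
  induction vs with
  | nil =>
    intro S _ _ _ hSne _ c _
    obtain ⟨u, hu⟩ := hSne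
    exact ⟨u, hu, by simp⟩
  | cons v₀ vs ih =>
    intro S hSA hSconv hScl hSne hS c hc
    have hv₀ : v₀ ∈ B := hvs v₀ List.mem_cons_self
    have hvs' : ∀ v ∈ vs, v ∈ B := fun v hv => hvs v (List.mem_cons_of_mem _ hv)
    set b := (c + β)/2 with hb
    have hcb : c < b := by rw [hb]; linarith
    have hbβ : b < β := by rw [hb]; linarith
    set S' := {u ∈ S | b ≤ L u v₀} with hS'def
    have hS'A : S' ⊆ A := fun u hu => hSA hu.1
    have hS'conv : Convex ℝ S' := superlevel_convex (hconc v₀ hv₀) hSconv hSA b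
    have hS'cl : IsClosed S' := closed_superlevel hScl ((husc v₀ hv₀).mono hSA) b
    have hS'ne : S'.Nonempty := by
      obtain ⟨u, huS, hu⟩ := hS v₀ hv₀ b hbβ
      exact ⟨u, huS, hu.le⟩
    have hS' : ∀ v ∈ B, ∀ lam : ℝ, lam < β → ∃ u ∈ S', lam < L u v := by
      intro v hv lam hlam
      obtain ⟨u, huS, h1, h2⟩ := twoPoint hBconv hconc husc haff hm hM hSA hSconv hScl hS
        hv₀ hv (c := max lam b) (max_lt hlam hbβ)
      exact ⟨u, ⟨huS, (le_max_right _ _).trans h1.le⟩, lt_of_le_of_lt (le_max_left _ _) h2⟩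
    obtain ⟨u, huS', hall⟩ := ih hvs' S' hS'A hS'conv hS'cl hS'ne hS' c hc
    refine ⟨u, huS'.1, ?_⟩
    intro v hv
    rcases List.mem_cons.1 hv with rfl | h
    · linarith [huS'.2]
    · exact hall v h

end Helpers

/-- Minimax (Ekeland–Temam): if `E` is a reflexive Banach space (the canonical inclusion
into the double dual is surjective), `A ⊆ E` is nonempty bounded closed convex,
`B` is a nonempty convex subset of a normed space, `L(·,v)` is concave and
upper semicontinuous on `A` for each `v ∈ B`, and `L(u,·)` is affine and continuous on `B`
for each `u ∈ A`, then `sup_{u∈A} inf_{v∈B} L(u,v) = inf_{v∈B} sup_{u∈A} L(u,v)`. -/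
theorem stmt14 {E F : Type*} [NormedAddCommGroup E] [NormedSpace ℝ E] [CompleteSpace E]
    [NormedAddCommGroup F] [NormedSpace ℝ F]
    (hrefl : Function.Surjective (NormedSpace.inclusionInDoubleDual ℝ E))
    (A : Set E) (B : Set F)
    (hAne : A.Nonempty) (hAbdd : Bornology.IsBounded A) (hAclosed : IsClosed A)
    (hAconv : Convex ℝ A) (hBne : B.Nonempty) (hBconv : Convex ℝ B)
    (L : E → F → ℝ)
    (hconc : ∀ v ∈ B, ConcaveOn ℝ A (fun u => L u v))
    (husc : ∀ v ∈ B, UpperSemicontinuousOn (fun u => L u v) A)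
    (haff : ∀ u ∈ A, ∀ v₁ ∈ B, ∀ v₂ ∈ B, ∀ c : ℝ, 0 ≤ c → c ≤ 1 →
      L u (c • v₁ + (1 - c) • v₂) = c * L u v₁ + (1 - c) * L u v₂)
    (hcont : ∀ u ∈ A, ContinuousOn (L u) B)
    (hbdd : BddAbove {r : ℝ | ∃ u ∈ A, ∃ v ∈ B, r = L u v})
    (hbdd' : BddBelow {r : ℝ | ∃ u ∈ A, ∃ v ∈ B, r = L u v}) :
    (⨆ u : A, ⨅ v : B, L u v) = ⨅ v : B, ⨆ u : A, L u v := by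
  obtain ⟨Mb, hMb⟩ := hbdd
  obtain ⟨mb, hmb⟩ := hbdd'
  have hM : ∀ u ∈ A, ∀ v ∈ B, L u v ≤ Mb := fun u hu v hv => hMb ⟨u, hu, v, hv, rfl⟩
  have hm : ∀ u ∈ A, ∀ v ∈ B, mb ≤ L u v := fun u hu v hv => hmb ⟨u, hu, v, hv, rfl⟩
  haveI hAne' : Nonempty A := hAne.to_subtype
  haveI hBne' : Nonempty B := hBne.to_subtype
  have hbddA : ∀ v : B, BddAbove (Set.range fun u : A => L u v) := fun v =>
    ⟨Mb, by rintro - ⟨u, rfl⟩; exact hM u u.2 v v.2⟩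
  have hbddB : ∀ u : A, BddBelow (Set.range fun v : B => L u v) := fun u =>
    ⟨mb, by rintro - ⟨v, rfl⟩; exact hm u u.2 v v.2⟩
  set β := ⨅ v : B, ⨆ u : A, L u v with hβ
  have hsupβ : ∀ v ∈ B, ∀ lam : ℝ, lam < β → ∃ u ∈ A, lam < L u v := by
    intro v hv lam hlam
    have h1 : β ≤ ⨆ u : A, L u ((⟨v, hv⟩ : B) : F) := by
      refine ciInf_le ⟨mb, ?_⟩ (⟨v, hv⟩ : B)
      rintro - ⟨w, rfl⟩
      exact le_trans (hm _ (Classical.arbitrary A).2 _ w.2) (le_ciSup (hbddA w) _)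
    obtain ⟨u, hu⟩ := exists_lt_of_lt_ciSup (lt_of_lt_of_le hlam h1)
    exact ⟨u, u.2, hu⟩
  have hbddsup : BddAbove (Set.range fun u : A => ⨅ v : B, L u v) := by
    refine ⟨Mb, ?_⟩
    rintro - ⟨u, rfl⟩
    exact le_trans (ciInf_le (hbddB u) (Classical.arbitrary B))
      (hM u u.2 _ (Classical.arbitrary B).2)
  have hle : (⨆ u : A, ⨅ v : B, L u v) ≤ β := by
    refine ciSup_le fun u => le_ciInf fun v => ?_
    exact (ciInf_le (hbddB u) v).trans (le_ciSup (hbddA v) u)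
  have hge : β ≤ ⨆ u : A, ⨅ v : B, L u v := by
    refine le_of_forall_lt fun c hcβ => ?_
    obtain ⟨c', hcc', hc'β⟩ := exists_between hcβ
    have hK := weakCompact_of_bounded_closed_convex hrefl hAbdd hAclosed hAconv
    set T : B → Set E := fun v => {u ∈ A | c' ≤ L u (v : F)} with hT
    have hTcl : ∀ v : B, IsClosed (toWeakSpace ℝ E '' T v) := fun v =>
      weakClosed_of_convex_closed (superlevel_convex (hconc _ v.2) hAconv le_rfl c')
        (closed_superlevel hAclosed (husc _ v.2) c')
    have hFIP : ∀ fin : Finset ↥B,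
        ((toWeakSpace ℝ E '' A) ∩ ⋂ v ∈ fin, toWeakSpace ℝ E '' T v).Nonempty := by
      intro fin
      have hvsB : ∀ v ∈ (fin.toList.map Subtype.val), v ∈ B := by
        intro v hv
        simp only [List.mem_map] at hv
        obtain ⟨w, -, rfl⟩ := hv
        exact w.2
      obtain ⟨u, huA, hall⟩ := finitePoint hBconv hconc husc haff hm hM
        (fin.toList.map Subtype.val) hvsB A le_rfl hAconv hAclosed hAne hsupβ c' hc'β
      refine ⟨toWeakSpace ℝ E u, ⟨u, huA, rfl⟩, ?_⟩
      simp only [Set.mem_iInter]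
      intro v hv
      refine ⟨u, ⟨huA, ?_⟩, rfl⟩
      exact (hall (v : F) (by
        simp only [List.mem_map]
        exact ⟨v, Finset.mem_toList.2 hv, rfl⟩)).le
    obtain ⟨x, hxA, hxT⟩ := hK.inter_iInter_nonempty
      (fun v : B => toWeakSpace ℝ E '' T v) hTcl hFIP
    obtain ⟨u₀, hu₀A, rfl⟩ := hxA
    have hu₀ : ∀ v : B, c' ≤ L u₀ v := by
      intro v
      obtain ⟨u', hu', heq⟩ := Set.mem_iInter.1 hxT v
      have h2 : u' = u₀ := (toWeakSpace ℝ E).injective heq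
      rw [← h2]
      exact hu'.2
    have h3 : c' ≤ ⨅ v : B, L u₀ v := le_ciInf hu₀
    exact lt_of_lt_of_le hcc' (h3.trans (le_ciSup hbddsup (⟨u₀, hu₀A⟩ : A)))
  exact le_antisymm hle hge
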